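/- Let D be a probability measure on α × Fin k, Q a probability measure on Θ, and g : Θ × α → Fin k a measurable classifier. Define the conditional risk r(x,y) = ∫_Θ 1[g(θ,x) ≠ y] dQ(θ). Then AV(Q) ≤ 2·R_D(Q) − ∫_{α×Fin k} r(x,y)² dD(x,y). (Refined intermediate inequality in the proof of Theorem 1, before applying Jensen's inequality.) -/

import Mathlib

open MeasureTheory

private lemma meas_ind {β : Type*} [MeasurableSpace β] {k : ℕ}
    {u v : β → Fin k} (hu : Measurable u) (hv : Measurable v) :
    Measurable (fun b => if u b ≠ v b then (1 : ℝ) else 0) := by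
  refine Measurable.ite ?_ measurable_const measurable_const
  exact (measurableSet_eq_fun hu hv).compl

private lemma int_ind {β : Type*} [MeasurableSpace β] (μ : Measure β)
    [IsProbabilityMeasure μ] {k : ℕ}
    {u v : β → Fin k} (hu : Measurable u) (hv : Measurable v) :
    Integrable (fun b => if u b ≠ v b then (1 : ℝ) else 0) μ := by
  refine (integrable_const (1 : ℝ)).mono' (meas_ind hu hv).aestronglyMeasurable ?_
  filter_upwards with b
  split <;> simp

/-- Refined intermediate inequality in the proof of Theorem 1:
`AV(Q) ≤ 2·R_D(Q) − ∫ r(x,y)² dD(x,y)` where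
`r(x,y) = ∫_Θ 1[g(θ,x) ≠ y] dQ(θ)` is the conditional risk. -/
theorem algorithm_db_variability_le_two_risk_sub_integral_conditional_risk_sq
    {α Θ : Type*} [MeasurableSpace α] [MeasurableSpace Θ]
    {k : ℕ} (hk : 2 ≤ k)
    (D : Measure (α × Fin k)) [IsProbabilityMeasure D]
    (Q : Measure Θ) [IsProbabilityMeasure Q]
    (g : Θ × α → Fin k) (hg : Measurable g) :
    (∫ p, ∫ θ, ∫ θ',
        (if g (θ, p.1) ≠ g (θ', p.1) then (1 : ℝ) else 0) ∂Q ∂Q ∂D) ≤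
      2 * (∫ p, ∫ θ, (if g (θ, p.1) ≠ p.2 then (1 : ℝ) else 0) ∂Q ∂D) -
        ∫ p, (∫ θ, (if g (θ, p.1) ≠ p.2 then (1 : ℝ) else 0) ∂Q) ^ 2 ∂D := by
  set f : Θ → α × Fin k → ℝ := fun θ p => if g (θ, p.1) ≠ p.2 then (1 : ℝ) else 0 with hf
  set r : α × Fin k → ℝ := fun p => ∫ θ, f θ p ∂Q with hr
  -- measurability of f in θ for fixed p
  have hgθ : ∀ p : α × Fin k, Measurable (fun θ => g (θ, p.1)) := fun p =>
    hg.comp (measurable_id.prodMk measurable_const)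
  have hmf : ∀ p : α × Fin k, Measurable (fun θ => f θ p) := fun p =>
    meas_ind (hgθ p) measurable_const
  have hif : ∀ p : α × Fin k, Integrable (fun θ => f θ p) Q := fun p =>
    int_ind Q (hgθ p) measurable_const
  have hf01 : ∀ θ p, 0 ≤ f θ p ∧ f θ p ≤ 1 := by
    intro θ p; simp only [hf]; split <;> norm_num
  have hr01 : ∀ p, 0 ≤ r p ∧ r p ≤ 1 := by
    intro p
    constructor
    · exact integral_nonneg fun θ => (hf01 θ p).1
    · calc r p ≤ ∫ _θ, (1 : ℝ) ∂Q := by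
            refine integral_mono (hif p) (integrable_const 1) fun θ => (hf01 θ p).2
      _ = 1 := by simp
  -- pointwise key inequality
  have key : ∀ p : α × Fin k,
      (∫ θ, ∫ θ', (if g (θ, p.1) ≠ g (θ', p.1) then (1 : ℝ) else 0) ∂Q ∂Q)
        ≤ 2 * r p - (r p) ^ 2 := by
    intro p
    have step1 : ∀ θ, (∫ θ', (if g (θ, p.1) ≠ g (θ', p.1) then (1 : ℝ) else 0) ∂Q)
        ≤ f θ p + r p - f θ p * r p := by
      intro θ
      have hptw : ∀ θ', (if g (θ, p.1) ≠ g (θ', p.1) then (1 : ℝ) else 0)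
          ≤ f θ p + f θ' p - f θ p * f θ' p := by
        intro θ'
        simp only [hf]
        by_cases h1 : g (θ, p.1) = p.2 <;> by_cases h2 : g (θ', p.1) = p.2
        · simp [h1, h2, h1.trans h2.symm]
        · split <;> simp [h1, h2]
        · split <;> simp [h1, h2]
        · split <;> simp [h1, h2]
      have hint1 : Integrable (fun θ' => (if g (θ, p.1) ≠ g (θ', p.1) then (1 : ℝ) else 0)) Q :=
        int_ind Q measurable_const (hgθ p)
      have hA : Integrable (fun θ' => f θ p + f θ' p) Q := (integrable_const _).add (hif p)
      have hB : Integrable (fun θ' => f θ p * f θ' p) Q := (hif p).const_mul _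
      have hint2 : Integrable (fun θ' => f θ p + f θ' p - f θ p * f θ' p) Q := hA.sub hB
      calc (∫ θ', (if g (θ, p.1) ≠ g (θ', p.1) then (1 : ℝ) else 0) ∂Q)
          ≤ ∫ θ', (f θ p + f θ' p - f θ p * f θ' p) ∂Q :=
            integral_mono hint1 hint2 hptw
        _ = f θ p + r p - f θ p * r p := by
            rw [integral_sub hA hB,
              integral_add (integrable_const _) (hif p), integral_const,
              integral_const_mul]
            simp [hr]
    have hintL : Integrable
        (fun θ => ∫ θ', (if g (θ, p.1) ≠ g (θ', p.1) then (1 : ℝ) else 0) ∂Q) Q := by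
      refine (integrable_const (1 : ℝ)).mono' ?_ ?_
      · have hH : Measurable (fun q : Θ × Θ =>
            (if g (q.1, p.1) ≠ g (q.2, p.1) then (1 : ℝ) else 0)) :=
          meas_ind (hg.comp (measurable_fst.prodMk measurable_const))
            (hg.comp (measurable_snd.prodMk measurable_const))
        exact (hH.stronglyMeasurable.integral_prod_right').aestronglyMeasurable
      · filter_upwards with θ
        rw [Real.norm_eq_abs, abs_of_nonneg (integral_nonneg fun θ' => by positivity)]
        calc _ ≤ ∫ _θ' , (1:ℝ) ∂Q := by
              refine integral_mono (int_ind Q measurable_const (hgθ p)) (integrable_const 1)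
                fun θ' => by split <;> norm_num
          _ = 1 := by simp
    have hC : Integrable (fun θ => f θ p + r p) Q := (hif p).add (integrable_const _)
    have hD : Integrable (fun θ => f θ p * r p) Q := (hif p).mul_const _
    have hintR : Integrable (fun θ => f θ p + r p - f θ p * r p) Q := hC.sub hD
    calc (∫ θ, ∫ θ', (if g (θ, p.1) ≠ g (θ', p.1) then (1 : ℝ) else 0) ∂Q ∂Q)
        ≤ ∫ θ, (f θ p + r p - f θ p * r p) ∂Q := integral_mono hintL hintR step1
      _ = r p + r p - r p * r p := by
          rw [integral_sub hC hD,
            integral_add (hif p) (integrable_const _), integral_const,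
            integral_mul_const]
          simp [hr]
      _ = 2 * r p - (r p) ^ 2 := by ring
  -- measurability of r
  have hmF : Measurable (Function.uncurry fun p (θ : Θ) => f θ p) := by
    exact meas_ind (hg.comp (measurable_snd.prodMk (measurable_fst.comp measurable_fst)))
      (measurable_snd.comp measurable_fst)
  have hmr : StronglyMeasurable r :=
    hmF.stronglyMeasurable.integral_prod_right
  have hir : Integrable r D := by
    refine (integrable_const (1 : ℝ)).mono' hmr.aestronglyMeasurable ?_
    filter_upwards with p
    rw [Real.norm_eq_abs, abs_of_nonneg (hr01 p).1]; exact (hr01 p).2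
  have hir2 : Integrable (fun p => (r p) ^ 2) D := by
    refine (integrable_const (1 : ℝ)).mono' (hmr.pow 2).aestronglyMeasurable ?_
    filter_upwards with p
    rw [Real.norm_eq_abs, abs_of_nonneg (by positivity)]
    exact pow_le_one₀ (hr01 p).1 (hr01 p).2
  have hintLHS : Integrable
      (fun p : α × Fin k => ∫ θ, ∫ θ',
        (if g (θ, p.1) ≠ g (θ', p.1) then (1 : ℝ) else 0) ∂Q ∂Q) D := by
    refine (integrable_const (1 : ℝ)).mono' ?_ ?_
    · have hH : Measurable (fun q : ((α × Fin k) × Θ) × Θ =>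
          (if g (q.1.2, q.1.1.1) ≠ g (q.2, q.1.1.1) then (1 : ℝ) else 0)) :=
        meas_ind
          (hg.comp ((measurable_snd.comp measurable_fst).prodMk
            (measurable_fst.comp (measurable_fst.comp measurable_fst))))
          (hg.comp (measurable_snd.prodMk
            (measurable_fst.comp (measurable_fst.comp measurable_fst))))
      exact (hH.stronglyMeasurable.integral_prod_right'.integral_prod_right').aestronglyMeasurable
    · filter_upwards with p
      have h0 : 0 ≤ ∫ θ, ∫ θ', (if g (θ, p.1) ≠ g (θ', p.1) then (1 : ℝ) else 0) ∂Q ∂Q :=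
        integral_nonneg fun θ => integral_nonneg fun θ' => by positivity
      rw [Real.norm_eq_abs, abs_of_nonneg h0]
      calc _ ≤ 2 * r p - (r p) ^ 2 := key p
        _ ≤ 1 := by nlinarith [(hr01 p).1, (hr01 p).2]
  calc (∫ p, ∫ θ, ∫ θ',
        (if g (θ, p.1) ≠ g (θ', p.1) then (1 : ℝ) else 0) ∂Q ∂Q ∂D)
      ≤ ∫ p, (2 * r p - (r p) ^ 2) ∂D :=
        integral_mono hintLHS (((hir.const_mul 2).sub hir2)) key
    _ = 2 * (∫ p, r p ∂D) - ∫ p, (r p) ^ 2 ∂D := by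
        rw [integral_sub (hir.const_mul 2) hir2, integral_const_mul]
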